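/- arXiv:2301.08999 — 2 statements merged into one kernel-verified Lean document; each statement's English description precedes it below -/
import Mathlib

section
/- Let A, B be n×n complex matrices and Ã = [[0, I], [A, 0]], B̃ = [[0, 0], [0, B]] ∈ ℂ^{2n×2n}. Then rank[B̃, ÃB̃, …, Ã^{2n−1}B̃] = 2 · rank[B, AB, …, A^{n−1}B]. In particular, (Ã, B̃) satisfies the Kalman rank condition (rank = 2n) if and only if (A, B) does (rank = n). -/
/-- The horizontally concatenated Kalman-type matrix `[B, AB, …, A^(k-1)B]`. -/
noncomputable def kalmanMat {N : Type*} [Fintype N] [DecidableEq N] (k : ℕ)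
    (A B : Matrix N N ℂ) : Matrix N (Fin k × N) ℂ :=
  Matrix.of fun i p => (A ^ (p.1 : ℕ) * B) i p.2

open Matrix Submodule

private lemma abig_pow_even {n : ℕ} (A : Matrix (Fin n) (Fin n) ℂ) (m : ℕ) :
    (fromBlocks 0 1 A 0 : Matrix (Fin n ⊕ Fin n) (Fin n ⊕ Fin n) ℂ) ^ (2 * m) =
      fromBlocks (A ^ m) 0 0 (A ^ m) := by
  induction m with
  | zero => simp [← fromBlocks_one]
  | succ m ih =>
    have h : 2 * (m + 1) = 2 * m + 1 + 1 := by ring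
    rw [h, pow_succ, pow_succ, ih]
    simp [fromBlocks_multiply, pow_succ]

private lemma abig_pow_odd {n : ℕ} (A : Matrix (Fin n) (Fin n) ℂ) (m : ℕ) :
    (fromBlocks 0 1 A 0 : Matrix (Fin n ⊕ Fin n) (Fin n ⊕ Fin n) ℂ) ^ (2 * m + 1) =
      fromBlocks 0 (A ^ m) (A ^ (m + 1)) 0 := by
  rw [pow_succ, abig_pow_even]
  simp [fromBlocks_multiply, pow_succ]

/-- For `Ã = [[0, I], [A, 0]]` and `B̃ = [[0, 0], [0, B]]` in `ℂ^{2n×2n}`: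
`rank [B̃, ÃB̃, …, Ã^(2n−1)B̃] = 2 · rank [B, AB, …, A^(n−1)B]`; in particular
`(Ã, B̃)` satisfies the Kalman rank condition iff `(A, B)` does. -/
theorem stmt_7 (n : ℕ) (A B : Matrix (Fin n) (Fin n) ℂ) :
    (kalmanMat (2 * n) (Matrix.fromBlocks 0 1 A 0 : Matrix (Fin n ⊕ Fin n) (Fin n ⊕ Fin n) ℂ)
        (Matrix.fromBlocks 0 0 0 B)).rank = 2 * (kalmanMat n A B).rank
    ∧ ((kalmanMat (2 * n)
          (Matrix.fromBlocks 0 1 A 0 : Matrix (Fin n ⊕ Fin n) (Fin n ⊕ Fin n) ℂ)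
          (Matrix.fromBlocks 0 0 0 B)).rank = 2 * n
        ↔ (kalmanMat n A B).rank = n) := by
  classical
  set Abig := (fromBlocks 0 1 A 0 : Matrix (Fin n ⊕ Fin n) (Fin n ⊕ Fin n) ℂ) with hAbig
  set Bbig := (fromBlocks 0 0 0 B : Matrix (Fin n ⊕ Fin n) (Fin n ⊕ Fin n) ℂ) with hBbig
  set M := kalmanMat (2 * n) Abig Bbig with hM
  set K := kalmanMat n A B with hK
  -- the two block embeddings
  let f : (Fin n → ℂ) →ₗ[ℂ] (Fin n ⊕ Fin n → ℂ) :=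
    { toFun := fun x => Sum.elim x 0
      map_add' := by intro x y; funext i; cases i <;> simp
      map_smul' := by intro c x; funext i; cases i <;> simp }
  let g : (Fin n → ℂ) →ₗ[ℂ] (Fin n ⊕ Fin n → ℂ) :=
    { toFun := fun x => Sum.elim 0 x
      map_add' := by intro x y; funext i; cases i <;> simp
      map_smul' := by intro c x; funext i; cases i <;> simp }
  have hf : Function.Injective f := by
    intro x y h
    funext i
    exact congrFun h (Sum.inl i)
  have hg : Function.Injective g := by
    intro x y h
    funext i
    exact congrFun h (Sum.inr i)
  set P := span ℂ (Set.range Kᵀ) with hP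
  -- product formulas
  have heven : ∀ m : ℕ, Abig ^ (2 * m) * Bbig = fromBlocks 0 0 0 (A ^ m * B) := by
    intro m
    rw [hAbig, abig_pow_even, hBbig]
    simp [fromBlocks_multiply]
  have hodd : ∀ m : ℕ, Abig ^ (2 * m + 1) * Bbig = fromBlocks 0 (A ^ m * B) 0 0 := by
    intro m
    rw [hAbig, abig_pow_odd, hBbig]
    simp [fromBlocks_multiply]
  -- span of columns
  have hspan : span ℂ (Set.range Mᵀ) = P.map f ⊔ P.map g := by
    apply le_antisymm
    · rw [span_le]
      rintro _ ⟨⟨k, j⟩, rfl⟩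
      have hk2 : (k : ℕ) % 2 < 2 := Nat.mod_lt _ (by norm_num)
      have hkeq : (k : ℕ) = 2 * ((k : ℕ) / 2) + (k : ℕ) % 2 := (Nat.div_add_mod _ _).symm
      have hmlt : (k : ℕ) / 2 < n := Nat.div_lt_of_lt_mul (by simpa [mul_comm] using k.2)
      set m : ℕ := (k : ℕ) / 2 with hm
      rcases j with c | c
      · -- zero column
        have : Mᵀ (k, Sum.inl c) = 0 := by
          funext i
          have : (Abig ^ (k : ℕ) * Bbig) i (Sum.inl c) = 0 := by
            interval_cases h : (k : ℕ) % 2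
            · rw [hkeq, Nat.add_zero, heven]
              cases i <;> simp
            · rw [hkeq, hodd]
              cases i <;> simp
          simpa [hM, kalmanMat, transpose_apply] using this
        rw [this]
        exact zero_mem _
      · interval_cases h : (k : ℕ) % 2
        · -- even: column lies in g-part
          have hcol : Mᵀ (k, Sum.inr c) = g (Kᵀ (⟨m, hmlt⟩, c)) := by
            funext i
            have h1 : (Abig ^ (k : ℕ) * Bbig) i (Sum.inr c) =
                (fromBlocks 0 0 0 (A ^ m * B) : Matrix (Fin n ⊕ Fin n) (Fin n ⊕ Fin n) ℂ)
                  i (Sum.inr c) := by rw [hkeq, Nat.add_zero, heven]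
            simp only [hM, hK, kalmanMat, transpose_apply, Matrix.of_apply]
            rw [h1]
            cases i <;> simp [g]
          rw [hcol]
          exact mem_sup_right (mem_map_of_mem (subset_span ⟨_, rfl⟩))
        · -- odd: column lies in f-part
          have hcol : Mᵀ (k, Sum.inr c) = f (Kᵀ (⟨m, hmlt⟩, c)) := by
            funext i
            have h1 : (Abig ^ (k : ℕ) * Bbig) i (Sum.inr c) =
                (fromBlocks 0 (A ^ m * B) 0 0 : Matrix (Fin n ⊕ Fin n) (Fin n ⊕ Fin n) ℂ)
                  i (Sum.inr c) := by rw [hkeq, hodd]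
            simp only [hM, hK, kalmanMat, transpose_apply, Matrix.of_apply]
            rw [h1]
            cases i <;> simp [f]
          rw [hcol]
          exact mem_sup_left (mem_map_of_mem (subset_span ⟨_, rfl⟩))
    · rw [sup_le_iff]
      constructor
      · rw [hP, Submodule.map_span]
        apply span_mono
        rintro _ ⟨_, ⟨⟨m, c⟩, rfl⟩, rfl⟩
        have hlt : 2 * (m : ℕ) + 1 < 2 * n := by omega
        refine ⟨(⟨2 * (m : ℕ) + 1, hlt⟩, Sum.inr c), ?_⟩
        funext i
        have h1 : (Abig ^ (2 * (m : ℕ) + 1) * Bbig) i (Sum.inr c) =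
            (fromBlocks 0 ((A ^ (m : ℕ)) * B) 0 0 :
              Matrix (Fin n ⊕ Fin n) (Fin n ⊕ Fin n) ℂ) i (Sum.inr c) := by rw [hodd]
        simp only [hM, hK, kalmanMat, transpose_apply, Matrix.of_apply]
        rw [h1]
        cases i <;> simp [f]
      · rw [hP, Submodule.map_span]
        apply span_mono
        rintro _ ⟨_, ⟨⟨m, c⟩, rfl⟩, rfl⟩
        have hlt : 2 * (m : ℕ) < 2 * n := by omega
        refine ⟨(⟨2 * (m : ℕ), hlt⟩, Sum.inr c), ?_⟩
        funext i
        have h1 : (Abig ^ (2 * (m : ℕ)) * Bbig) i (Sum.inr c) =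
            (fromBlocks 0 0 0 ((A ^ (m : ℕ)) * B) :
              Matrix (Fin n ⊕ Fin n) (Fin n ⊕ Fin n) ℂ) i (Sum.inr c) := by rw [heven]
        simp only [hM, hK, kalmanMat, transpose_apply, Matrix.of_apply]
        rw [h1]
        cases i <;> simp [g]
  -- disjointness
  have hdisj : P.map f ⊓ P.map g = ⊥ := by
    rw [eq_bot_iff]
    rintro x ⟨⟨a, _, rfl⟩, ⟨b, _, hb⟩⟩
    have ha : a = 0 := by
      funext i
      have h2 := congrFun hb (Sum.inl i)
      simp only [f, g, LinearMap.coe_mk, AddHom.coe_mk, Sum.elim_inl, Sum.elim_inr,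
        Pi.zero_apply] at h2
      exact h2.symm
    simp [ha, Submodule.mem_bot]
  have hmain : M.rank = 2 * K.rank := by
    rw [rank_eq_finrank_span_cols, col_def, hspan, rank_eq_finrank_span_cols, col_def, ← hP]
    have h1 := Submodule.finrank_sup_add_finrank_inf_eq (P.map f) (P.map g)
    rw [hdisj, finrank_bot, Nat.add_zero] at h1
    have h2 : Module.finrank ℂ (P.map f) = Module.finrank ℂ P :=
      (LinearEquiv.finrank_eq (Submodule.equivMapOfInjective f hf P)).symm
    have h3 : Module.finrank ℂ (P.map g) = Module.finrank ℂ P :=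
      (LinearEquiv.finrank_eq (Submodule.equivMapOfInjective g hg P)).symm
    omega
  exact ⟨hmain, by rw [hmain]; omega⟩
end

section
/- Let A be an n×n complex matrix and Ã = [[0, I], [A, 0]] ∈ ℂ^{2n×2n}. Then exp(tÃ) = [[S₂(t), S₁(t)], [S₁(t)·A, S₂(t)]], where S₁(t) = Σ_{k≥0} t^{2k+1}/(2k+1)! · A^k and S₂(t) = Σ_{k≥0} t^{2k}/(2k)! · A^k. -/
open Matrix

attribute [local instance] Matrix.linftyOpNormedAddCommGroup Matrix.linftyOpNormedRing
  Matrix.linftyOpNormedSpace Matrix.linftyOpNormedAlgebra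

/-- Summability of subseries of the exponential-type series. -/
lemma aux_summable {m : ℕ} (A : Matrix (Fin m) (Fin m) ℂ) (t : ℝ) (g : ℕ → ℕ)
    (hg : Function.Injective g) (hk : ∀ k, k ≤ g k) :
    Summable fun k : ℕ => ((t ^ g k / (g k).factorial : ℝ)) • A ^ k := by
  set C : ℝ := max 1 ‖A‖ with hC
  have hC1 : (1:ℝ) ≤ C := le_max_left _ _
  have hAC : ‖A‖ ≤ C := le_max_right _ _
  set M : ℝ := max 1 ‖(1 : Matrix (Fin m) (Fin m) ℂ)‖ with hM
  have hM1 : (1:ℝ) ≤ M := le_max_left _ _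
  have hsum : Summable fun k : ℕ => M * ((|t| * C) ^ g k / (g k).factorial) := by
    refine Summable.mul_left M ?_
    exact (Real.summable_pow_div_factorial (|t| * C)).comp_injective hg
  refine hsum.of_norm_bounded (fun k => ?_)
  have hpow : ‖A ^ k‖ ≤ M * C ^ g k := by
    rcases Nat.eq_zero_or_pos k with hk0 | hk0
    · subst hk0
      simp only [pow_zero]
      calc ‖(1 : Matrix (Fin m) (Fin m) ℂ)‖ ≤ M := le_max_right _ _
        _ = M * 1 := (mul_one M).symm
        _ ≤ M * C ^ g 0 := by
            have h1 : (1:ℝ) ≤ C ^ g 0 := one_le_pow₀ hC1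
            nlinarith
    · calc ‖A ^ k‖ ≤ ‖A‖ ^ k := norm_pow_le' A hk0
        _ ≤ C ^ k := pow_le_pow_left₀ (norm_nonneg A) hAC k
        _ ≤ C ^ g k := pow_le_pow_right₀ hC1 (hk k)
        _ = 1 * C ^ g k := (one_mul _).symm
        _ ≤ M * C ^ g k := by
            refine mul_le_mul_of_nonneg_right hM1 (by positivity)
  have hCk : (0:ℝ) ≤ C ^ g k := by positivity
  calc ‖((t ^ g k / (g k).factorial : ℝ)) • A ^ k‖
      = |t ^ g k / (g k).factorial| * ‖A ^ k‖ := by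
        rw [norm_smul, Real.norm_eq_abs]
    _ = |t| ^ g k / (g k).factorial * ‖A ^ k‖ := by
        rw [abs_div, abs_pow, Nat.abs_cast]
    _ ≤ |t| ^ g k / (g k).factorial * (M * C ^ g k) := by
        refine mul_le_mul_of_nonneg_left hpow (by positivity)
    _ = M * ((|t| * C) ^ g k / (g k).factorial) := by
        rw [mul_pow]; ring

/-- Matrix exponential of a block anti-diagonal matrix:
`exp(tÃ) = [[S₂(t), S₁(t)], [S₁(t)A, S₂(t)]]` for `Ã = [[0, I], [A, 0]]`, where
`exp`, `S₁`, `S₂` are given by their (absolutely convergent) power series: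
`S₁(t) = Σ t^(2k+1)/(2k+1)! A^k` and `S₂(t) = Σ t^(2k)/(2k)! A^k`. -/
theorem stmt_8 (n : ℕ) (A : Matrix (Fin n) (Fin n) ℂ) (t : ℝ) :
    (∑' k : ℕ, ((t ^ k / k.factorial : ℝ)) •
        ((Matrix.fromBlocks 0 1 A 0 : Matrix (Fin n ⊕ Fin n) (Fin n ⊕ Fin n) ℂ)) ^ k)
      = Matrix.fromBlocks
          (∑' k : ℕ, ((t ^ (2 * k) / (2 * k).factorial : ℝ)) • A ^ k)
          (∑' k : ℕ, ((t ^ (2 * k + 1) / (2 * k + 1).factorial : ℝ)) • A ^ k)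
          ((∑' k : ℕ, ((t ^ (2 * k + 1) / (2 * k + 1).factorial : ℝ)) • A ^ k) * A)
          (∑' k : ℕ, ((t ^ (2 * k) / (2 * k).factorial : ℝ)) • A ^ k) := by
  classical
  set B : Matrix (Fin n ⊕ Fin n) (Fin n ⊕ Fin n) ℂ := Matrix.fromBlocks 0 1 A 0 with hB
  set f : ℕ → Matrix (Fin n ⊕ Fin n) (Fin n ⊕ Fin n) ℂ :=
    fun k => ((t ^ k / k.factorial : ℝ)) • B ^ k with hf
  -- powers of B
  have hB2 : B ^ 2 = Matrix.fromBlocks A 0 0 A := by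
    rw [sq, hB, Matrix.fromBlocks_multiply]
    simp
  have hBeven : ∀ k : ℕ, B ^ (2 * k) = Matrix.fromBlocks (A ^ k) 0 0 (A ^ k) := by
    intro k
    induction k with
    | zero => simp [Matrix.fromBlocks_one]
    | succ k ih =>
      have : 2 * (k + 1) = 2 * k + 2 := by ring
      rw [this, pow_add, ih, hB2, Matrix.fromBlocks_multiply]
      simp [pow_succ]
  have hBodd : ∀ k : ℕ, B ^ (2 * k + 1) =
      Matrix.fromBlocks 0 (A ^ k) (A ^ k * A) 0 := by
    intro k
    rw [pow_succ, hBeven k, hB, Matrix.fromBlocks_multiply]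
    simp
  -- block embeddings as continuous add monoid homs
  have hcont1 : Continuous fun X : Matrix (Fin n) (Fin n) ℂ =>
      (Matrix.fromBlocks X 0 0 X : Matrix (Fin n ⊕ Fin n) (Fin n ⊕ Fin n) ℂ) := by
    apply continuous_matrix; intro i j
    rcases i with i | i <;> rcases j with j | j <;> simp only [Matrix.fromBlocks,
      Matrix.of_apply, Sum.elim_inl, Sum.elim_inr, Matrix.zero_apply] <;>
      first
        | exact continuous_const
        | exact continuous_id.matrix_elem i j
  have hcont2 : Continuous fun X : Matrix (Fin n) (Fin n) ℂ =>
      (Matrix.fromBlocks 0 X (X * A) 0 : Matrix (Fin n ⊕ Fin n) (Fin n ⊕ Fin n) ℂ) := by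
    have hmul : Continuous fun X : Matrix (Fin n) (Fin n) ℂ => X * A :=
      continuous_id.matrix_mul continuous_const
    apply continuous_matrix; intro i j
    rcases i with i | i <;> rcases j with j | j <;> simp only [Matrix.fromBlocks,
      Matrix.of_apply, Sum.elim_inl, Sum.elim_inr, Matrix.zero_apply] <;>
      first
        | exact continuous_const
        | exact continuous_id.matrix_elem i j
        | exact hmul.matrix_elem i j
  let g1 : Matrix (Fin n) (Fin n) ℂ →+ Matrix (Fin n ⊕ Fin n) (Fin n ⊕ Fin n) ℂ :=
    { toFun := fun X => Matrix.fromBlocks X 0 0 X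
      map_zero' := by simp
      map_add' := fun X Y => by
        show Matrix.fromBlocks (X + Y) 0 0 (X + Y) = _
        rw [Matrix.fromBlocks_add]; simp }
  let g2 : Matrix (Fin n) (Fin n) ℂ →+ Matrix (Fin n ⊕ Fin n) (Fin n ⊕ Fin n) ℂ :=
    { toFun := fun X => Matrix.fromBlocks 0 X (X * A) 0
      map_zero' := by simp
      map_add' := fun X Y => by
        show Matrix.fromBlocks 0 (X + Y) ((X + Y) * A) 0 = _
        rw [add_mul, Matrix.fromBlocks_add]; simp }
  -- summability
  have hS2 : Summable fun k : ℕ => ((t ^ (2 * k) / (2 * k).factorial : ℝ)) • A ^ k :=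
    aux_summable A t (fun k => 2 * k)
      (fun a b h => by dsimp only at h; omega) (fun k => by omega)
  have hS1 : Summable fun k : ℕ => ((t ^ (2 * k + 1) / (2 * k + 1).factorial : ℝ)) • A ^ k :=
    aux_summable A t (fun k => 2 * k + 1)
      (fun a b h => by dsimp only at h; omega) (fun k => by omega)
  have hfe : (fun k : ℕ => f (2 * k)) =
      ⇑g1 ∘ fun k => (((t ^ (2 * k) / (2 * k).factorial : ℝ)) • A ^ k) := by
    funext k
    simp only [hf, hBeven k, g1, Function.comp_apply, AddMonoidHom.coe_mk, ZeroHom.coe_mk]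
    rw [Matrix.fromBlocks_smul]
    simp
  have hfo : (fun k : ℕ => f (2 * k + 1)) =
      ⇑g2 ∘ fun k => (((t ^ (2 * k + 1) / (2 * k + 1).factorial : ℝ)) • A ^ k) := by
    funext k
    simp only [hf, hBodd k, g2, Function.comp_apply, AddMonoidHom.coe_mk, ZeroHom.coe_mk]
    rw [Matrix.fromBlocks_smul, smul_mul_assoc]
    simp
  have hse : Summable fun k : ℕ => f (2 * k) := by
    rw [hfe]; exact hS2.map g1 hcont1
  have hso : Summable fun k : ℕ => f (2 * k + 1) := by
    rw [hfo]; exact hS1.map g2 hcont2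
  have key := tsum_even_add_odd hse hso
  rw [← key, hfe, hfo,
    (hS2.hasSum.map g1 hcont1).tsum_eq, (hS1.hasSum.map g2 hcont2).tsum_eq]
  show Matrix.fromBlocks _ 0 0 _ + Matrix.fromBlocks 0 _ (_ * A) 0 = _
  rw [Matrix.fromBlocks_add]
  simp
end
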